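/- Let l₀ ≥ 1 be the minimal integer such that K^{⊗l₀} admits a never-vanishing pseudoholomorphic section, trivialized by F·Ω^{⊗l₀} with F never-vanishing smooth. If for some p with 0 < p < l₀ there exists a nonzero smooth function g with g·Ω^{⊗p} pseudoholomorphic, then g^{l₀}·Ω^{⊗p·l₀} and F^p·Ω^{⊗p·l₀} are both pseudoholomorphic sections of K^{⊗p·l₀}, hence g^{l₀} is a constant multiple of F^p, so g is never-vanishing — contradicting minimality of l₀. Therefore K^{⊗p} has no nonzero pseudoholomorphic sections for 0 < p < l₀. -/
import Mathlib


/-- The operator `D_l(f) = ∂̄f + l·f·γ`, so that `f·Ω^{⊗l}` is a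
pseudoholomorphic section of `K^{⊗l}` iff `D_l(f) = 0`, where `∂̄Ω = γ∧Ω`. -/
noncomputable def Dop {M : Type*} [TopologicalSpace M]
    {A : Type*} [AddCommGroup A] [Module ℂ A] [Module C(M, ℂ) A]
    [IsScalarTower ℂ C(M, ℂ) A]
    (dbar : C(M, ℂ) →ₗ[ℂ] A) (γ : A) (l : ℕ) : C(M, ℂ) →ₗ[ℂ] A where
  toFun f := dbar f + (l : ℂ) • (f • γ)
  map_add' f g := by simp [add_smul]; abel
  map_smul' c f := by
    simp [smul_assoc, smul_comm c ((l : ℂ))]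

/-- let `l₀ ≥ 1` be minimal such that `K^{⊗l₀}` admits a
never-vanishing pseudoholomorphic section `F·Ω^{⊗l₀}` (`F` never-vanishing,
`D_{l₀}F = 0`).  Then for `0 < p < l₀` the bundle `K^{⊗p}` has no nonzero
pseudoholomorphic section: `D_p(g) = 0` implies `g = 0`.
Here `∂̄` is an abstract `∂̄`-operator satisfying the Leibniz rule and the
maximum principle (`∂̄`-closed functions on the compact connected `M` are
constant). -/
theorem stmt_3 {M : Type*} [TopologicalSpace M] [CompactSpace M]
    [ConnectedSpace M]
    {A : Type*} [AddCommGroup A] [Module ℂ A] [Module C(M, ℂ) A]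
    [IsScalarTower ℂ C(M, ℂ) A]
    (dbar : C(M, ℂ) →ₗ[ℂ] A)
    (hleib : ∀ f g : C(M, ℂ), dbar (f * g) = f • dbar g + g • dbar f)
    (hmax : ∀ f : C(M, ℂ), dbar f = 0 → ∃ c : ℂ, f = ContinuousMap.const M c)
    (γ : A) (l₀ : ℕ) (hl₀ : 1 ≤ l₀)
    (F : C(M, ℂ)) (hFnv : ∀ x, F x ≠ 0) (hF : Dop dbar γ l₀ F = 0)
    (hmin : ∀ l : ℕ, 1 ≤ l → l < l₀ →
      ¬ ∃ h : C(M, ℂ), (∀ x, h x ≠ 0) ∧ Dop dbar γ l h = 0) :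
    ∀ p : ℕ, 0 < p → p < l₀ → ∀ g : C(M, ℂ), Dop dbar γ p g = 0 → g = 0 := by
  intro p hp hpl g hg
  by_contra hgne
  -- dbar of constants
  have h1 : dbar 1 = 0 := by
    have h := hleib 1 1
    rw [one_mul, one_smul] at h
    exact (left_eq_add.mp h)
  -- commuting scalars
  have hcomm : ∀ (c : ℂ) (f : C(M, ℂ)) (a : A), f • (c • a) = c • (f • a) := by
    intro c f a
    calc f • (c • a) = f • ((c • (1 : C(M, ℂ))) • a) := by rw [smul_assoc, one_smul]
      _ = (f * (c • (1 : C(M, ℂ)))) • a := (mul_smul _ _ _).symm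
      _ = (c • (f * 1)) • a := by rw [mul_smul_comm]
      _ = c • (f • a) := by rw [mul_one, smul_assoc]
  -- power rule
  have hpow : ∀ (f : C(M, ℂ)) (c : ℂ), dbar f = c • (f • γ) →
      ∀ n : ℕ, dbar (f ^ n) = ((n : ℂ) * c) • (f ^ n • γ) := by
    intro f c hf n
    induction n with
    | zero => simp [h1]
    | succ n ih =>
      rw [pow_succ, hleib, ih, hf, hcomm, hcomm, ← mul_smul, ← mul_smul,
        mul_comm f (f ^ n), ← add_smul]
      push_cast
      ring_nf
  -- unfold the Dop hypotheses
  have hDg : dbar g = (-(p : ℂ)) • (g • γ) := by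
    have h := hg
    simp only [Dop, LinearMap.coe_mk, AddHom.coe_mk] at h
    rw [neg_smul]
    exact eq_neg_of_add_eq_zero_left h
  have hDF : dbar F = (-(l₀ : ℂ)) • (F • γ) := by
    have h := hF
    simp only [Dop, LinearMap.coe_mk, AddHom.coe_mk] at h
    rw [neg_smul]
    exact eq_neg_of_add_eq_zero_left h
  -- inverse of F
  have hFc : Continuous fun x => (F x)⁻¹ := (map_continuous F).inv₀ hFnv
  set Fi : C(M, ℂ) := ⟨fun x => (F x)⁻¹, hFc⟩ with hFi
  have hFFi : F * Fi = 1 := by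
    ext x
    simp only [ContinuousMap.mul_apply, ContinuousMap.one_apply, hFi,
      ContinuousMap.coe_mk]
    exact mul_inv_cancel₀ (hFnv x)
  have hdFi : dbar Fi = (l₀ : ℂ) • (Fi • γ) := by
    have h0 : F • dbar Fi + Fi • dbar F = 0 := by
      rw [← hleib, hFFi, h1]
    have h2 : F • dbar Fi = -(Fi • dbar F) := eq_neg_of_add_eq_zero_left h0
    have h3 : Fi • (F • dbar Fi) = dbar Fi := by
      rw [← mul_smul, mul_comm, hFFi, one_smul]
    rw [h2] at h3
    rw [← h3, hDF, hcomm, ← mul_smul, mul_comm Fi F, hFFi, one_smul, neg_smul,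
      neg_neg, hcomm]
  -- the quotient function is dbar-closed
  have hdgp : dbar (g ^ l₀) = ((l₀ : ℂ) * (-(p : ℂ))) • (g ^ l₀ • γ) :=
    hpow g _ hDg l₀
  have hdFp : dbar (Fi ^ p) = ((p : ℂ) * (l₀ : ℂ)) • (Fi ^ p • γ) :=
    hpow Fi _ hdFi p
  have hdu : dbar (g ^ l₀ * Fi ^ p) = 0 := by
    rw [hleib, hdgp, hdFp, hcomm, hcomm, ← mul_smul, ← mul_smul,
      mul_comm (Fi ^ p) (g ^ l₀), ← add_smul]
    have : ((p : ℂ) * (l₀ : ℂ)) + ((l₀ : ℂ) * (-(p : ℂ))) = 0 := by ring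
    rw [this, zero_smul]
  obtain ⟨c0, hc0⟩ := hmax _ hdu
  -- g^l₀ = c0 • F^p
  have hkey : g ^ l₀ = ContinuousMap.const M c0 * F ^ p := by
    have h4 : g ^ l₀ * Fi ^ p * F ^ p = g ^ l₀ := by
      rw [mul_assoc, ← mul_pow, mul_comm Fi F, hFFi, one_pow, mul_one]
    rw [← h4, hc0]
  -- g nonzero somewhere
  obtain ⟨x, hx⟩ : ∃ x, g x ≠ 0 := by
    by_contra h
    push_neg at h
    exact hgne (ContinuousMap.ext fun x => h x)
  have hc0ne : c0 ≠ 0 := by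
    intro hc
    have := congrArg (fun f : C(M, ℂ) => f x) hkey
    simp only [ContinuousMap.pow_apply, ContinuousMap.mul_apply,
      ContinuousMap.const_apply, hc, zero_mul] at this
    exact pow_ne_zero l₀ hx this
  have hgnv : ∀ y, g y ≠ 0 := by
    intro y hy
    have := congrArg (fun f : C(M, ℂ) => f y) hkey
    simp only [ContinuousMap.pow_apply, ContinuousMap.mul_apply,
      ContinuousMap.const_apply, hy, zero_pow (by omega : l₀ ≠ 0)] at this
    exact (mul_ne_zero hc0ne (pow_ne_zero p (hFnv y))) this.symm
  exact hmin p hp hpl ⟨g, hgnv, hg⟩
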